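/- The path P_4 with 4 edges divides the 5-dimensional hypercube Q_5. -/

import Mathlib

open SimpleGraph

/-- `H` divides `G`: the edge set of `G` can be partitioned into edge sets of
subgraphs of `G`, each isomorphic to `H`. -/
def GraphDivides {α β : Type} (H : SimpleGraph α) (G : SimpleGraph β) : Prop :=
  ∃ (ι : Type) (f : ι → G.Subgraph),
    (∀ i, Nonempty (H ≃g (f i).coe)) ∧
    ∀ e ∈ G.edgeSet, ∃! i, e ∈ (f i).edgeSet

/-- The `n`-dimensional hypercube graph. -/
def cube (n : ℕ) : SimpleGraph (Fin n → ZMod 2) where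
  Adj x y := hammingDist x y = 1
  symm := ⟨fun x y h => by rwa [hammingDist_comm]⟩
  loopless := ⟨fun x h => by simp [hammingDist_self] at h⟩

instance (n : ℕ) : DecidableRel (cube n).Adj :=
  fun x y => inferInstanceAs (Decidable (hammingDist x y = 1))

def paths20 : Fin 20 → Fin 5 → (Fin 5 → ZMod 2) :=
  ![![![1,1,0,0,1], ![1,1,1,0,1], ![0,1,1,0,1], ![0,0,1,0,1], ![0,0,1,1,1]],
    ![![0,0,1,0,0], ![1,0,1,0,0], ![1,0,1,0,1], ![1,1,1,0,1], ![1,1,1,0,0]],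
    ![![0,0,1,0,0], ![0,0,1,1,0], ![0,1,1,1,0], ![0,1,1,0,0], ![1,1,1,0,0]],
    ![![1,1,0,0,0], ![1,1,0,1,0], ![1,0,0,1,0], ![1,0,0,0,0], ![1,0,1,0,0]],
    ![![0,1,1,1,1], ![0,1,1,1,0], ![0,1,0,1,0], ![1,1,0,1,0], ![1,1,0,1,1]],
    ![![1,0,1,0,1], ![0,0,1,0,1], ![0,0,0,0,1], ![0,0,0,0,0], ![1,0,0,0,0]],
    ![![0,0,0,0,1], ![1,0,0,0,1], ![1,0,0,1,1], ![1,0,0,1,0], ![0,0,0,1,0]],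
    ![![0,0,1,1,0], ![0,0,1,1,1], ![0,0,0,1,1], ![1,0,0,1,1], ![1,0,1,1,1]],
    ![![0,0,1,0,1], ![0,0,1,0,0], ![0,0,0,0,0], ![0,1,0,0,0], ![0,1,0,0,1]],
    ![![1,0,0,1,0], ![1,0,1,1,0], ![0,0,1,1,0], ![0,0,0,1,0], ![0,0,0,0,0]],
    ![![1,1,0,0,1], ![1,1,0,1,1], ![1,1,1,1,1], ![1,1,1,1,0], ![1,1,0,1,0]],
    ![![1,1,1,0,1], ![1,1,1,1,1], ![1,0,1,1,1], ![1,0,1,1,0], ![1,1,1,1,0]],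
    ![![1,0,0,0,1], ![1,0,0,0,0], ![1,1,0,0,0], ![0,1,0,0,0], ![0,1,1,0,0]],
    ![![1,0,1,0,1], ![1,0,1,1,1], ![0,0,1,1,1], ![0,1,1,1,1], ![0,1,1,0,1]],
    ![![0,1,0,1,0], ![0,1,0,1,1], ![0,1,0,0,1], ![0,0,0,0,1], ![0,0,0,1,1]],
    ![![0,1,0,0,0], ![0,1,0,1,0], ![0,0,0,1,0], ![0,0,0,1,1], ![0,1,0,1,1]],
    ![![1,0,1,1,0], ![1,0,1,0,0], ![1,1,1,0,0], ![1,1,1,1,0], ![0,1,1,1,0]],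
    ![![0,0,1,0,0], ![0,1,1,0,0], ![0,1,1,0,1], ![0,1,0,0,1], ![1,1,0,0,1]],
    ![![1,1,1,0,0], ![1,1,0,0,0], ![1,1,0,0,1], ![1,0,0,0,1], ![1,0,1,0,1]],
    ![![1,0,0,1,1], ![1,1,0,1,1], ![0,1,0,1,1], ![0,1,1,1,1], ![1,1,1,1,1]]]

lemma paths20_inj : ∀ i, Function.Injective (paths20 i) := by decide

lemma paths20_adj : ∀ (i : Fin 20) (j : Fin 4),
    (cube 5).Adj (paths20 i j.castSucc) (paths20 i j.succ) := by decide

def pathSub (i : Fin 20) : (cube 5).Subgraph where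
  verts := Set.range (paths20 i)
  Adj x y := ∃ j : Fin 4, (x = paths20 i j.castSucc ∧ y = paths20 i j.succ) ∨
      (x = paths20 i j.succ ∧ y = paths20 i j.castSucc)
  adj_sub := by
    rintro x y ⟨j, ⟨rfl, rfl⟩ | ⟨rfl, rfl⟩⟩
    · exact paths20_adj i j
    · exact (paths20_adj i j).symm
  edge_vert := by
    rintro x y ⟨j, ⟨rfl, rfl⟩ | ⟨rfl, rfl⟩⟩
    · exact ⟨_, rfl⟩
    · exact ⟨_, rfl⟩
  symm := by
    constructor
    rintro x y ⟨j, h | h⟩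
    · exact ⟨j, Or.inr ⟨h.2, h.1⟩⟩
    · exact ⟨j, Or.inl ⟨h.2, h.1⟩⟩

instance (i : Fin 20) : DecidableRel (pathSub i).Adj :=
  fun x y => inferInstanceAs (Decidable (∃ j : Fin 4, _))

lemma idx_adj : ∀ a b : Fin 5,
    ((∃ j : Fin 4, (a = j.castSucc ∧ b = j.succ) ∨ (a = j.succ ∧ b = j.castSucc)) ↔
      (pathGraph 5).Adj a b) := by simp only [pathGraph_adj]; decide

noncomputable def pathIso (i : Fin 20) : pathGraph 5 ≃g (pathSub i).coe where
  toEquiv := (Equiv.ofInjective _ (paths20_inj i)).trans (Equiv.setCongr rfl)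
  map_rel_iff' := by
    intro a b
    show (pathSub i).Adj (paths20 i a) (paths20 i b) ↔ _
    rw [← idx_adj a b]
    constructor
    · rintro ⟨j, ⟨h1, h2⟩ | ⟨h1, h2⟩⟩
      · exact ⟨j, Or.inl ⟨paths20_inj i h1, paths20_inj i h2⟩⟩
      · exact ⟨j, Or.inr ⟨paths20_inj i h1, paths20_inj i h2⟩⟩
    · rintro ⟨j, ⟨rfl, rfl⟩ | ⟨rfl, rfl⟩⟩
      · exact ⟨j, Or.inl ⟨rfl, rfl⟩⟩
      · exact ⟨j, Or.inr ⟨rfl, rfl⟩⟩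

instance (i : Fin 20) : DecidablePred (· ∈ (pathSub i).edgeSet) :=
  Sym2.fromRel.decidablePred _

set_option maxRecDepth 8000 in
set_option maxHeartbeats 1000000 in
lemma cover_exists' : ∀ x y, (cube 5).Adj x y → ∃ i, (pathSub i).Adj x y := by decide

set_option maxRecDepth 8000 in
set_option maxHeartbeats 8000000 in
lemma edges_distinct : ∀ (i j : Fin 20) (k l : Fin 4),
    ((paths20 i k.castSucc = paths20 j l.castSucc ∧ paths20 i k.succ = paths20 j l.succ) ∨
     (paths20 i k.castSucc = paths20 j l.succ ∧ paths20 i k.succ = paths20 j l.castSucc)) →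
    i = j := by decide

lemma cover_uniq' (i j : Fin 20) (x y : Fin 5 → ZMod 2)
    (hi : (pathSub i).Adj x y) (hj : (pathSub j).Adj x y) : i = j := by
  obtain ⟨k, hk⟩ := hi
  obtain ⟨l, hl⟩ := hj
  apply edges_distinct i j k l
  rcases hk with ⟨rfl, rfl⟩ | ⟨rfl, rfl⟩ <;> rcases hl with ⟨h1, h2⟩ | ⟨h1, h2⟩
  · exact Or.inl ⟨h1, h2⟩
  · exact Or.inr ⟨h1, h2⟩
  · exact Or.inr ⟨h2, h1⟩
  · exact Or.inl ⟨h2, h1⟩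

lemma cover_unique : ∀ e ∈ (cube 5).edgeSet, ∃! i, e ∈ (pathSub i).edgeSet := by
  intro e
  refine e.ind (fun x y he => ?_)
  rw [mem_edgeSet] at he
  obtain ⟨i, hi⟩ := cover_exists' x y he
  refine ⟨i, Subgraph.mem_edgeSet.2 hi, fun j hj => ?_⟩
  exact cover_uniq' j i x y (Subgraph.mem_edgeSet.1 hj) hi

theorem path4_divides_cube5 : GraphDivides (pathGraph 5) (cube 5) :=
  ⟨Fin 20, pathSub, fun i => ⟨pathIso i⟩, cover_unique⟩
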